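/- For real numbers a, b and p ≥ 1, the one-dimensional function φ(t) = (1/(p+1))|t|^{p+1} satisfies φ(a) ≥ φ(b) + φ'(b)(a − b) + (1/2^{p−1})·φ(a − b), where φ'(b) = |b|^{p−1} b. -/

import Mathlib

open Real intervalIntegral

lemma my_superadd {p x y : ℝ} (hp : 1 ≤ p) (hx : 0 ≤ x) (hy : 0 ≤ y) :
    x ^ p + y ^ p ≤ (x + y) ^ p := by
  have h := NNReal.add_rpow_le_rpow_add x.toNNReal y.toNNReal hp
  have h2 := NNReal.coe_le_coe.2 h
  push_cast at h2
  rwa [Real.coe_toNNReal _ hx, Real.coe_toNNReal _ hy] at h2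

lemma my_midpoint {p r m : ℝ} (hp : 1 ≤ p) (hm : 0 ≤ m) (hmr : m ≤ r) :
    2 * r ^ p ≤ (r + m) ^ p + (r - m) ^ p := by
  have hc := (convexOn_rpow (by linarith : (1:ℝ) ≤ p)).2 (x := r + m) (y := r - m)
    (by simp only [Set.mem_Ici]; linarith) (by simp only [Set.mem_Ici]; linarith)
    (by norm_num : (0:ℝ) ≤ (1/2:ℝ)) (by norm_num : (0:ℝ) ≤ (1/2:ℝ)) (by norm_num)
  simp only [smul_eq_mul] at hc
  have : (1/2 : ℝ) * (r + m) + (1/2 : ℝ) * (r - m) = r := by ring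
  rw [this] at hc
  linarith

lemma g_nn {p : ℝ} (hp : 1 ≤ p) {t : ℝ} (ht : 0 ≤ t) : |t| ^ (p - 1) * t = t ^ p := by
  rcases ht.eq_or_lt with h | h
  · rw [← h, abs_zero, mul_zero, Real.zero_rpow (by linarith : p ≠ 0)]
  · rw [abs_of_pos h, ← Real.rpow_add_one h.ne' (p - 1)]
    norm_num

lemma g_np {p : ℝ} (hp : 1 ≤ p) {t : ℝ} (ht : t ≤ 0) :
    |t| ^ (p - 1) * t = -((-t) ^ p) := by
  have h := g_nn hp (neg_nonneg.2 ht)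
  rw [abs_neg] at h
  linarith [h]

lemma my_claim_nn {p r : ℝ} (hp : 1 ≤ p) (hr : 0 < r) {m : ℝ} (hm : 0 ≤ m) :
    2 * r ^ p ≤ |m + r| ^ (p - 1) * (m + r) - |m - r| ^ (p - 1) * (m - r) := by
  rcases le_total r m with hrm | hrm
  · rw [g_nn hp (by linarith), g_nn hp (by linarith)]
    have h1 := my_superadd hp (x := m - r) (y := 2 * r) (by linarith) (by linarith)
    have he : m - r + 2 * r = m + r := by ring
    rw [he] at h1
    have h2 : (2 * r) ^ p = 2 ^ p * r ^ p := Real.mul_rpow (by norm_num) hr.le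
    have h3 : (2 : ℝ) ≤ 2 ^ p := by
      calc (2:ℝ) = 2 ^ (1:ℝ) := (Real.rpow_one 2).symm
      _ ≤ 2 ^ p := Real.rpow_le_rpow_of_exponent_le one_le_two hp
    have h4 : 0 ≤ r ^ p := Real.rpow_nonneg hr.le p
    nlinarith
  · rw [g_nn hp (by linarith), g_np hp (by linarith)]
    have h := my_midpoint hp hm hrm
    rw [neg_sub, sub_neg_eq_add, add_comm m r]
    linarith

lemma my_claim {p r : ℝ} (hp : 1 ≤ p) (hr : 0 < r) (m : ℝ) :
    2 * r ^ p ≤ |m + r| ^ (p - 1) * (m + r) - |m - r| ^ (p - 1) * (m - r) := by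
  rcases le_total 0 m with hm | hm
  · exact my_claim_nn hp hr hm
  · have h := my_claim_nn hp hr (neg_nonneg.2 hm)
    have e1 : -m + r = -(m - r) := by ring
    have e2 : -m - r = -(m + r) := by ring
    rw [e1, e2, abs_neg, abs_neg, mul_neg, mul_neg] at h
    linarith

lemma my_key' {p : ℝ} (hp : 1 ≤ p) {x y : ℝ} (hyx : y < x) :
    2 ^ (1 - p) * |x - y| ^ (p + 1) ≤ (|x| ^ (p - 1) * x - |y| ^ (p - 1) * y) * (x - y) := by
  set r : ℝ := (x - y) / 2 with hrdef
  set m : ℝ := (x + y) / 2 with hmdef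
  have hr : 0 < r := by rw [hrdef]; linarith
  have hc := my_claim hp hr m
  have ex : m + r = x := by rw [hrdef, hmdef]; ring
  have ey : m - r = y := by rw [hrdef, hmdef]; ring
  rw [ex, ey] at hc
  have hxy : x - y = 2 * r := by rw [hrdef]; ring
  rw [hxy, abs_of_pos (by linarith : (0:ℝ) < 2 * r)]
  have h1 : (2 * r) ^ (p + 1) = 2 ^ (p + 1) * r ^ (p + 1) := Real.mul_rpow (by norm_num) hr.le
  have h2 : (2 : ℝ) ^ (1 - p) * 2 ^ (p + 1) = 4 := by
    rw [← Real.rpow_add (by norm_num : (0:ℝ) < 2)]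
    have : (1 - p) + (p + 1) = ((2:ℕ) : ℝ) := by push_cast; ring
    rw [this, Real.rpow_natCast]
    norm_num
  have h3 : r ^ (p + 1) = r ^ p * r := Real.rpow_add_one hr.ne' p
  have hg : (2:ℝ) ^ (1 - p) * (2 * r) ^ (p + 1) = 4 * r ^ p * r := by
    rw [h1, h3, ← mul_assoc, h2]; ring
  rw [hg]
  nlinarith [mul_le_mul_of_nonneg_right hc hr.le]

lemma my_key {p : ℝ} (hp : 1 ≤ p) (x y : ℝ) :
    2 ^ (1 - p) * |x - y| ^ (p + 1) ≤ (|x| ^ (p - 1) * x - |y| ^ (p - 1) * y) * (x - y) := by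
  rcases lt_trichotomy x y with h | h | h
  · have hk := my_key' hp h
    have e1 : |y - x| = |x - y| := abs_sub_comm y x
    rw [e1] at hk
    nlinarith [hk]
  · rw [h, sub_self, abs_zero, Real.zero_rpow (by linarith : p + 1 ≠ 0)]
    simp
  · exact my_key' hp h

/-- One-dimensional uniform convexity inequality for `φ(t) = (1/(p+1))|t|^{p+1}`:
`φ(a) ≥ φ(b) + φ'(b)(a − b) + 2^{1−p} φ(a − b)` with `φ'(b) = |b|^{p−1} b`. -/
theorem stmt1 (p : ℝ) (hp : 1 ≤ p) (a b : ℝ) :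
    (1 / (p + 1)) * |a| ^ (p + 1) ≥
      (1 / (p + 1)) * |b| ^ (p + 1)
        + (|b| ^ (p - 1) * b) * (a - b)
        + (1 / 2 ^ (p - 1)) * ((1 / (p + 1)) * |a - b| ^ (p + 1)) := by
  have hp1 : (0:ℝ) < p + 1 := by linarith
  set c : ℝ := a - b with hcdef
  -- derivative
  have hd : ∀ t : ℝ, HasDerivAt (fun s : ℝ => (1/(p+1)) * |b + s*c| ^ (p+1))
      ((|b + t*c| ^ (p-1) * (b + t*c)) * c) t := by
    intro t
    have h1 : HasDerivAt (fun s : ℝ => b + s*c) c t := by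
      simpa using ((hasDerivAt_id t).mul_const c).const_add b
    have h2 := (hasDerivAt_abs_rpow (b + t*c) (by linarith : (1:ℝ) < p + 1)).comp t h1
    have h3 := h2.const_mul (1/(p+1))
    refine HasDerivAt.congr_deriv h3 ?_
    have : p + 1 - 2 = p - 1 := by ring
    rw [this]
    field_simp
  -- continuity of the derivative
  have hlin : Continuous fun t : ℝ => b + t*c := by continuity
  have hcont : Continuous fun t : ℝ => (|b + t*c| ^ (p-1) * (b + t*c)) * c := by
    exact ((hlin.abs.rpow_const (fun x => Or.inr (by linarith))).mul hlin).mul continuous_const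
  -- FTC
  have hftc := intervalIntegral.integral_eq_sub_of_hasDerivAt (a := (0:ℝ)) (b := (1:ℝ))
    (fun t _ => hd t) (hcont.intervalIntegrable 0 1)
  -- pointwise lower bound
  have hlb : ∀ t ∈ Set.Icc (0:ℝ) 1,
      (|b| ^ (p-1) * b) * c + 2 ^ (1-p) * |c| ^ (p+1) * t ^ p
        ≤ (|b + t*c| ^ (p-1) * (b + t*c)) * c := by
    intro t ht
    rcases ht.1.eq_or_lt with h0 | h0
    · rw [← h0]
      rw [Real.zero_rpow (by linarith : p ≠ 0)]
      simp
    · have hk := my_key hp (b + t*c) b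
      have e : b + t*c - b = t*c := by ring
      rw [e] at hk
      have e2 : |t*c| = t * |c| := by rw [abs_mul, abs_of_pos h0]
      have e3 : (t*|c|) ^ (p+1) = t ^ (p+1) * |c| ^ (p+1) :=
        Real.mul_rpow h0.le (abs_nonneg c)
      have e4 : t ^ (p+1) = t ^ p * t := Real.rpow_add_one h0.ne' p
      rw [e2, e3, e4] at hk
      rw [← mul_le_mul_iff_of_pos_right h0]
      nlinarith [hk]
  -- integrability of lower bound
  have hi1 : IntervalIntegrable
      (fun t : ℝ => (|b| ^ (p-1) * b) * c + 2 ^ (1-p) * |c| ^ (p+1) * t ^ p)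
      MeasureTheory.volume 0 1 :=
    intervalIntegrable_const.add ((intervalIntegrable_rpow' (by linarith : (-1:ℝ) < p)).const_mul _)
  have hmono := intervalIntegral.integral_mono_on (by norm_num : (0:ℝ) ≤ 1) hi1
    (hcont.intervalIntegrable 0 1) hlb
  -- compute the lower integral
  have hC : (∫ t in (0:ℝ)..1, ((|b| ^ (p-1) * b) * c + 2 ^ (1-p) * |c| ^ (p+1) * t ^ p))
      = (|b| ^ (p-1) * b) * c + 2 ^ (1-p) * |c| ^ (p+1) * (1/(p+1)) := by
    rw [intervalIntegral.integral_add intervalIntegrable_const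
      ((intervalIntegrable_rpow' (by linarith : (-1:ℝ) < p)).const_mul _),
      intervalIntegral.integral_const, intervalIntegral.integral_const_mul,
      integral_rpow (Or.inl (by linarith : (-1:ℝ) < p))]
    rw [Real.one_rpow, Real.zero_rpow (by linarith : p + 1 ≠ 0)]
    simp
  rw [hC] at hmono
  rw [hftc] at hmono
  have e1 : b + 1*c = a := by rw [hcdef]; ring
  have e0 : b + 0*c = b := by ring
  rw [e1, e0] at hmono
  have h2p : (1:ℝ) / 2 ^ (p-1) = 2 ^ (1-p) := by
    rw [one_div, ← Real.rpow_neg (by norm_num : (0:ℝ) ≤ 2)]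
    congr 1
    ring
  rw [ge_iff_le, h2p]
  linarith [hmono]
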